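/- Let p : X → Y, q : Y → Z be surjective continuous maps and r = q ∘ p. If any two of p, q, r are local homeomorphisms, then so is the third. -/

import Mathlib

/-- Two-out-of-three for local homeomorphisms: if `p : X → Y` and `q : Y → Z` are surjective
continuous maps and `r = q ∘ p`, then whenever two of `p, q, r` are local homeomorphisms,
so is the third. -/
theorem two_of_three_isLocalHomeomorph {X Y Z : Type*} [TopologicalSpace X] [TopologicalSpace Y]
    [TopologicalSpace Z] (p : X → Y) (q : Y → Z)
    (hpc : Continuous p) (hqc : Continuous q)
    (hps : Function.Surjective p) (hqs : Function.Surjective q) :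
    (IsLocalHomeomorph p → IsLocalHomeomorph q → IsLocalHomeomorph (q ∘ p)) ∧
    (IsLocalHomeomorph q → IsLocalHomeomorph (q ∘ p) → IsLocalHomeomorph p) ∧
    (IsLocalHomeomorph p → IsLocalHomeomorph (q ∘ p) → IsLocalHomeomorph q) := by
  refine ⟨fun hp hq => hq.comp hp, fun hq hr => hr.of_comp hq hpc, fun hp hr => ?_⟩
  rw [isLocalHomeomorph_iff_isLocalHomeomorphOn_univ]
  have := IsLocalHomeomorphOn.of_comp_right (g := q) (f := p) (s := Set.univ) hr.isLocalHomeomorphOn hp.isLocalHomeomorphOn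
  rwa [Set.image_univ, Set.range_eq_univ.mpr hps] at this
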